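/- Let w ≥ 78 be an even integer and let q be a polynomial with real coefficients of degree at most w/2 such that q(1) = q(−1) = 0 and |q(z) − sin(2πz)| ≤ 1/100 for all complex z with |z| ≤ 5/4. Let p be the unique polynomial satisfying p(x) = q(x) + x^w·q(1/x) for all x ≠ 0, and assume that p is odd (p(−x) = −p(x) identically) and that p(x) + x^w·p(1 − 1/x) + (x−1)^w·p(−1/(x−1)) = 0 for all x ∉ {0,1}. Then p is a nonzero polynomial of degree w − 1; it has simple zeros at 0, 2, −2, 1/2, −1/2 and zeros of multiplicity exactly 2 at 1 and −1; and every other zero of p lies on the unit circle |z| = 1. -/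

import Mathlib

open Real Polynomial

section ZPPAux

open Complex Metric

namespace ZPP



lemma abs_le_mul_of_two_zeros (f : ℂ → ℂ) (hf : Differentiable ℂ f)
    (h1 : f 1 = 0) (hm1 : f (-1) = 0)
    (hb : ∀ z : ℂ, ‖z‖ = 5/4 → ‖f z‖ ≤ 1/100) :
    ∀ z : ℂ, ‖z‖ ≤ 5/4 → ‖f z‖ ≤ 16/900 * ‖z^2 - 1‖ := by
  have hg1 : Differentiable ℂ (dslope f 1) := by
    rw [← differentiableOn_univ] at hf ⊢
    exact (Complex.differentiableOn_dslope Filter.univ_mem).mpr hf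
  set g := dslope (dslope f 1) (-1) with hgdef
  have hg : Differentiable ℂ g := by
    rw [← differentiableOn_univ] at hg1 ⊢
    exact (Complex.differentiableOn_dslope Filter.univ_mem).mpr hg1
  have hg1m1 : dslope f 1 (-1) = 0 := by
    rw [dslope_of_ne f (by norm_num), slope_def_field]
    simp [h1, hm1]
  have key : ∀ z : ℂ, f z = ((z - 1) * (z + 1)) * g z := by
    intro z
    rcases eq_or_ne z 1 with rfl | hz1
    · simp [h1]
    rcases eq_or_ne z (-1) with rfl | hzm1
    · simp [hm1]
    have e1 : dslope f 1 z = f z / (z - 1) := by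
      rw [dslope_of_ne f hz1, slope_def_field, h1, sub_zero]
    have e2 : g z = dslope f 1 z / (z + 1) := by
      rw [hgdef, dslope_of_ne _ hzm1, slope_def_field, hg1m1, sub_zero,
        sub_neg_eq_add]
    rw [e2, e1]
    have hz1' : z - 1 ≠ 0 := sub_ne_zero.mpr hz1
    have hzm1' : z + 1 ≠ 0 := by
      intro h; apply hzm1; linear_combination h
    field_simp
  have hfr : ∀ z ∈ frontier (ball (0:ℂ) (5/4)), ‖g z‖ ≤ 16/900 := by
    intro z hz
    rw [frontier_ball (0:ℂ) (by norm_num)] at hz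
    have habs : ‖z‖ = 5/4 := by
      simpa [Complex.dist_eq] using hz
    have h2 : (9:ℝ)/16 ≤ ‖(z-1)*(z+1)‖ := by
      have h3 := norm_sub_norm_le (z^2) (1:ℂ)
      simp only [norm_pow, norm_one] at h3
      have : (z-1)*(z+1) = z^2 - 1 := by ring
      rw [this]
      rw [habs] at h3
      nlinarith [h3]
    have hfz := hb z habs
    have hfg : ‖f z‖ = ‖(z-1)*(z+1)‖ * ‖g z‖ := by
      rw [key z, norm_mul]
    have hgnn : 0 ≤ ‖g z‖ := norm_nonneg _
    nlinarith
  intro z hzle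
  have hcl : z ∈ closure (ball (0:ℂ) (5/4)) := by
    rw [closure_ball (0:ℂ) (by norm_num)]
    simpa [Complex.dist_eq] using hzle
  have hmax := Complex.norm_le_of_forall_mem_frontier_norm_le isBounded_ball
    hg.diffContOnCl hfr hcl
  calc ‖f z‖ = ‖(z-1)*(z+1)‖ * ‖g z‖ := by
        rw [key z, norm_mul]
    _ ≤ ‖(z-1)*(z+1)‖ * (16/900) := by
        exact mul_le_mul_of_nonneg_left hmax (norm_nonneg _)
    _ = 16/900 * ‖z^2-1‖ := by
        rw [show (z-1)*(z+1) = z^2 - 1 by ring]; ring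

lemma abs_deriv_le (f : ℂ → ℂ) (hf : Differentiable ℂ f) (h0 : f 0 = 0)
    (hb : ∀ z : ℂ, ‖z‖ = 5/4 → ‖f z‖ ≤ 1/100) :
    ‖deriv f 0‖ ≤ 1/125 := by
  set g := dslope f 0 with hgdef
  have hg : Differentiable ℂ g := by
    rw [← differentiableOn_univ] at hf ⊢
    exact (Complex.differentiableOn_dslope Filter.univ_mem).mpr hf
  have hfr : ∀ z ∈ frontier (ball (0:ℂ) (5/4)), ‖g z‖ ≤ 1/125 := by
    intro z hz
    rw [frontier_ball (0:ℂ) (by norm_num)] at hz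
    have habs : ‖z‖ = 5/4 := by simpa [Complex.dist_eq] using hz
    have hzne : z ≠ 0 := by
      intro h; rw [h] at habs; norm_num at habs
    have e1 : g z = f z / z := by
      rw [hgdef, dslope_of_ne f hzne, slope_def_field, h0, sub_zero, sub_zero]
    rw [e1, norm_div, habs, div_le_iff₀ (by norm_num)]
    calc ‖f z‖ ≤ 1/100 := hb z habs
      _ = 1/125 * (5/4) := by norm_num
  have hcl : (0:ℂ) ∈ closure (ball (0:ℂ) (5/4)) := by
    rw [closure_ball (0:ℂ) (by norm_num)]
    simp
    norm_num
  have hmax := Complex.norm_le_of_forall_mem_frontier_norm_le isBounded_ball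
    hg.diffContOnCl hfr hcl
  rw [hgdef, dslope_same] at hmax
  simpa using hmax




section Alg

variable (w : ℕ) (q p : Polynomial ℂ)

-- the reflected polynomial
noncomputable def refl : Polynomial ℂ :=
  ∑ j ∈ Finset.range (w+1), C (q.coeff j) * X^(w - j)

lemma refl_eval (hqdeg : q.natDegree ≤ w) (x : ℂ) (hx : x ≠ 0) :
    (refl w q).eval x = x^w * q.eval x⁻¹ := by
  rw [refl, eval_finset_sum]
  rw [Polynomial.eval_eq_sum_range' (lt_of_le_of_lt hqdeg (Nat.lt_succ_self w)),
    Finset.mul_sum]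
  apply Finset.sum_congr rfl
  intro j hj
  rw [Finset.mem_range] at hj
  have hjw : j ≤ w := Nat.lt_succ_iff.mp hj
  rw [eval_mul, eval_C, eval_pow, eval_X]
  rw [inv_pow, pow_sub₀ x hx hjw]
  field_simp

lemma refl_coeff (k : ℕ) (hk : k ≤ w) : (refl w q).coeff k = q.coeff (w - k) := by
  rw [refl, finset_sum_coeff]
  rw [Finset.sum_eq_single (w - k)]
  · rw [coeff_C_mul, coeff_X_pow, if_pos (by omega), mul_one]
  · intro j hj hjne
    rw [Finset.mem_range] at hj
    rw [coeff_C_mul, coeff_X_pow, if_neg (by omega), mul_zero]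
  · intro h
    exact absurd (Finset.mem_range.mpr (by omega)) h

lemma refl_coeff_hi (k : ℕ) (hk : w < k) : (refl w q).coeff k = 0 := by
  rw [refl, finset_sum_coeff]
  apply Finset.sum_eq_zero
  intro j hj
  rw [Finset.mem_range] at hj
  rw [coeff_C_mul, coeff_X_pow, if_neg (by omega), mul_zero]

end Alg




lemma eval_conj (s : Polynomial ℂ) (hs : ∀ n, (s.coeff n).im = 0) (z : ℂ) :
    s.eval ((starRingEnd ℂ) z) = (starRingEnd ℂ) (s.eval z) := by
  have hmap : s.map (starRingEnd ℂ) = s := by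
    ext k; rw [coeff_map]; exact Complex.conj_eq_iff_im.mpr (hs k)
  conv_lhs => rw [← hmap]
  rw [eval_map]
  exact eval₂_at_apply (starRingEnd ℂ) z

/-- The real function whose zeros detect zeros of `p` on the unit circle. -/
noncomputable def Ff (w : ℕ) (q : Polynomial ℂ) (θ : ℝ) : ℝ :=
  2 * (Complex.exp ((-((w:ℝ)/2*θ) : ℝ) * I) * q.eval (Complex.exp ((θ:ℝ) * I))).re

lemma p_eval_circle (w : ℕ) (q p : Polynomial ℂ)
    (hqreal : ∀ n, (q.coeff n).im = 0)
    (hp : ∀ x : ℂ, x ≠ 0 → p.eval x = q.eval x + x ^ w * q.eval x⁻¹) (θ : ℝ) :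
    p.eval (Complex.exp ((θ:ℝ) * I))
      = Complex.exp ((((w:ℝ)/2*θ : ℝ)) * I) * ((Ff w q θ : ℝ) : ℂ) := by
  set e := Complex.exp ((θ:ℝ) * I) with he
  have hene : e ≠ 0 := Complex.exp_ne_zero _
  have hinv : e⁻¹ = Complex.exp ((↑(-θ)) * I) := by
    rw [he, ← Complex.exp_neg]; congr 1; push_cast; ring
  have hconj : Complex.exp ((↑(-θ)) * I) = (starRingEnd ℂ) e := by
    rw [he, ← Complex.exp_conj, map_mul, Complex.conj_I, Complex.conj_ofReal]
    congr 1; push_cast; ring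
  have hqe : q.eval e⁻¹ = (starRingEnd ℂ) (q.eval e) := by
    rw [hinv, hconj, eval_conj q hqreal]
  have hew : e ^ w = Complex.exp ((↑((w:ℝ)*θ)) * I) := by
    rw [he, ← Complex.exp_nat_mul]; congr 1; push_cast; ring
  rw [hp e hene, hqe, hew]
  set A := Complex.exp ((-((w:ℝ)/2*θ) : ℝ) * I) * q.eval e with hA
  have hFA : ((Ff w q θ : ℝ) : ℂ) = A + (starRingEnd ℂ) A := by
    rw [Complex.add_conj]
    simp only [Ff, ← he, ← hA]
  rw [hFA, mul_add]
  congr 1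
  · rw [hA, ← mul_assoc, ← Complex.exp_add]
    have h0 : (((w:ℝ)/2*θ : ℝ) : ℂ) * I + ((-((w:ℝ)/2*θ) : ℝ) : ℂ) * I = 0 := by
      push_cast; ring
    rw [h0, Complex.exp_zero, one_mul]
  · rw [hA, map_mul, ← Complex.exp_conj, map_mul, Complex.conj_I, Complex.conj_ofReal,
      ← mul_assoc, ← Complex.exp_add]
    congr 2
    push_cast; ring

lemma F_est (w : ℕ) (q : Polynomial ℂ)
    (hδ : ∀ z : ℂ, ‖z‖ ≤ 5/4 →
      ‖q.eval z - Complex.sin (2*(π:ℂ)*z)‖ ≤ 16/900 * ‖z^2 - 1‖)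
    (θ : ℝ) (hθ0 : 0 < θ) (hθπ : θ < π) :
    |Ff w q θ - Real.exp (2*π*Real.sin θ) * Real.sin ((w:ℝ)/2*θ + 2*π*Real.cos θ)|
      ≤ Real.exp (-(2*π*Real.sin θ)) + 64/900 * Real.sin θ := by
  set s := Real.sin θ with hs
  set c := Real.cos θ with hc
  set a := (w:ℝ)/2*θ with ha
  set β := (w:ℝ)/2*θ + 2*π*c with hβ
  set e := Complex.exp ((θ:ℝ) * I) with he
  have hece : e = (↑c + ↑s*I) := by
    rw [he, Complex.exp_mul_I, ← Complex.ofReal_cos, ← Complex.ofReal_sin]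
  have pyth0 : c^2 + s^2 = 1 := by
    rw [hs, hc]; have := Real.sin_sq_add_cos_sq θ; linarith
  have pyth : (c:ℂ)^2 + (s:ℂ)^2 = 1 := by exact_mod_cast pyth0
  set δ := q.eval e - Complex.sin (2*(π:ℂ)*e) with hδdef
  have hqe : q.eval e = Complex.sin (2*(π:ℂ)*e) + δ := by rw [hδdef]; ring
  have hsin : Complex.sin (2*(π:ℂ)*e)
      = (Complex.exp (-(2*(π:ℂ)*e) * I) - Complex.exp ((2*(π:ℂ)*e) * I)) * I / 2 := rfl
  set T1 := Complex.exp ((↑(-a)) * I) * (Complex.exp (-(2*(π:ℂ)*e) * I) * I / 2) with hT1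
  set T2 := -(Complex.exp ((↑(-a)) * I) * (Complex.exp ((2*(π:ℂ)*e) * I) * I / 2)) with hT2
  set T3 := Complex.exp ((↑(-a)) * I) * δ with hT3
  have hsplit : Complex.exp ((↑(-a)) * I) * q.eval e = T1 + T2 + T3 := by
    rw [hqe, hsin, hT1, hT2, hT3]
    ring
  have hFsplit : Ff w q θ = 2*T1.re + (2*T2.re + 2*T3.re) := by
    simp only [Ff, ← he]
    rw [show ((-((w:ℝ)/2*θ) : ℝ) : ℂ) = ((↑(-a)) : ℂ) by rw [ha]]
    rw [hsplit]
    simp only [Complex.add_re]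
    ring
  have hT1exp : Complex.exp ((↑(-a)) * I) * Complex.exp (-(2*(π:ℂ)*e) * I)
      = Complex.exp (↑(2*π*s) + (↑(-β)) * I) := by
    rw [← Complex.exp_add]
    congr 1
    rw [hece, hβ, ← ha]
    push_cast
    linear_combination (-(2*(π:ℂ)*(s:ℂ))) * Complex.I_sq
  have hT1eq : T1 = Complex.exp (↑(2*π*s) + (↑(-β)) * I) * I / 2 := by
    rw [hT1, show Complex.exp ((↑(-a)) * I) * (Complex.exp (-(2*(π:ℂ)*e) * I) * I / 2)
        = (Complex.exp ((↑(-a)) * I) * Complex.exp (-(2*(π:ℂ)*e) * I)) * I / 2 by ring,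
      hT1exp]
  have hT1re : 2*T1.re = Real.exp (2*π*s) * Real.sin β := by
    rw [hT1eq]
    have hre : (↑(2*π*s) + (↑(-β)) * I).re = 2*π*s := by simp
    have him : (↑(2*π*s) + (↑(-β)) * I).im = -β := by simp
    simp only [Complex.div_re, Complex.mul_re, Complex.mul_im, Complex.I_re, Complex.I_im,
      Complex.exp_re, Complex.exp_im, hre, him, Complex.normSq]
    simp [Real.sin_neg, Real.cos_neg]
    ring
  have hT2abs : ‖T2‖ = Real.exp (-(2*π*s)) / 2 := by
    rw [hT2, norm_neg]
    rw [show Complex.exp ((↑(-a)) * I) * (Complex.exp ((2*(π:ℂ)*e) * I) * I / 2)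
        = (Complex.exp ((↑(-a)) * I) * Complex.exp ((2*(π:ℂ)*e) * I)) * I / 2 by ring]
    have hexp2 : Complex.exp ((↑(-a)) * I) * Complex.exp ((2*(π:ℂ)*e) * I)
        = Complex.exp (↑(-(2*π*s)) + (↑(2*π*c - a)) * I) := by
      rw [← Complex.exp_add]
      congr 1
      rw [hece]
      push_cast
      linear_combination ((2*(π:ℂ)*(s:ℂ))) * Complex.I_sq
    rw [hexp2]
    rw [norm_div, norm_mul, Complex.norm_I, Complex.norm_exp]
    have : (↑(-(2*π*s)) + (↑(2*π*c - a)) * I).re = -(2*π*s) := by simp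
    rw [this]
    simp
  have he2 : e^2 - 1 = e * ((↑(2*s)) * I) := by
    rw [hece]
    push_cast
    linear_combination pyth - ((s:ℂ)^2) * Complex.I_sq
  have habse : ‖e‖ = 1 := by rw [he]; exact Complex.norm_exp_ofReal_mul_I θ
  have hspos : 0 < s := Real.sin_pos_of_pos_of_lt_pi hθ0 hθπ
  have hT3abs : ‖T3‖ ≤ 16/900 * (2*s) := by
    rw [hT3, norm_mul]
    have h1 : ‖Complex.exp ((↑(-a)) * I)‖ = 1 := Complex.norm_exp_ofReal_mul_I _
    rw [h1, one_mul]
    have h2 := hδ e (by rw [habse]; norm_num)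
    rw [← hδdef] at h2
    calc ‖δ‖ ≤ 16/900 * ‖e^2-1‖ := h2
      _ = 16/900 * (2*s) := by
          rw [he2, norm_mul, norm_mul, habse, Complex.norm_I, Complex.norm_real, Real.norm_eq_abs]
          rw [abs_of_pos (by linarith)]
          ring
  rw [hFsplit, hT1re, add_sub_cancel_left]
  have hre2 := Complex.abs_re_le_norm T2
  have hre3 := Complex.abs_re_le_norm T3
  calc |2*T2.re + 2*T3.re| ≤ |2*T2.re| + |2*T3.re| := abs_add_le _ _
    _ ≤ 2*‖T2‖ + 2*‖T3‖ := by
        have h2 : |(2:ℝ)| = 2 := by norm_num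
        rw [abs_mul, abs_mul, h2]
        gcongr
    _ ≤ Real.exp (-(2*π*s)) + 64/900 * s := by
        rw [hT2abs]
        nlinarith [hT3abs]




lemma sum_rootMultiplicity_le (p : Polynomial ℂ) (hp : p ≠ 0) (S : Finset ℂ) :
    ∑ z ∈ S, p.rootMultiplicity z ≤ p.natDegree := by
  classical
  have hcard : p.roots.card = p.natDegree :=
    splits_iff_card_roots.mp (IsAlgClosed.splits p)
  have h1 : ∑ z ∈ S, p.rootMultiplicity z = ∑ z ∈ S, p.roots.count z := by
    apply Finset.sum_congr rfl
    intro z _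
    exact (count_roots p).symm
  rw [h1, ← hcard]
  have h2 : ∑ z ∈ S, p.roots.count z = ∑ z ∈ S ∩ p.roots.toFinset, p.roots.count z := by
    apply (Finset.sum_subset Finset.inter_subset_left ?_).symm
    intro z hzS hz
    rw [Finset.mem_inter, not_and] at hz
    have : z ∉ p.roots.toFinset := hz hzS
    rw [Multiset.mem_toFinset] at this
    exact Multiset.count_eq_zero_of_notMem this
  rw [h2]
  calc ∑ z ∈ S ∩ p.roots.toFinset, p.roots.count z
      ≤ ∑ z ∈ p.roots.toFinset, p.roots.count z := by
        apply Finset.sum_le_sum_of_subset_of_nonneg Finset.inter_subset_right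
        intro _ _ _; exact Nat.zero_le _
    _ = p.roots.card := Multiset.toFinset_sum_count_eq _

end ZPP


set_option maxHeartbeats 1000000 in
theorem ZPP.main_aux
    (w : ℕ) (hw : 78 ≤ w) (hweven : Even w)
    (q : Polynomial ℂ) (hqreal : ∀ n, (q.coeff n).im = 0)
    (hqdeg : q.natDegree ≤ w / 2)
    (hq1 : q.eval 1 = 0) (hqm1 : q.eval (-1) = 0)
    (hqsin : ∀ z : ℂ, ‖z‖ ≤ 5 / 4 →
      ‖q.eval z - Complex.sin (2 * (π : ℂ) * z)‖ ≤ 1 / 100)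
    (p : Polynomial ℂ)
    (hp : ∀ x : ℂ, x ≠ 0 → p.eval x = q.eval x + x ^ w * q.eval x⁻¹)
    (hodd : ∀ x : ℂ, p.eval (-x) = -p.eval x)
    (hU : ∀ x : ℂ, x ≠ 0 → x ≠ 1 →
      p.eval x + x ^ w * p.eval (1 - 1 / x)
        + (x - 1) ^ w * p.eval (-1 / (x - 1)) = 0) :
    p ≠ 0 ∧ p.natDegree = w - 1 ∧
    p.rootMultiplicity 0 = 1 ∧ p.rootMultiplicity 2 = 1 ∧ p.rootMultiplicity (-2) = 1 ∧
    p.rootMultiplicity (1 / 2) = 1 ∧ p.rootMultiplicity (-(1 / 2)) = 1 ∧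
    p.rootMultiplicity 1 = 2 ∧ p.rootMultiplicity (-1) = 2 ∧
    (∀ z : ℂ, p.eval z = 0 →
      z ∉ ({0, 2, -2, 1 / 2, -(1 / 2), 1, -1} : Set ℂ) → ‖z‖ = 1) := by
  classical
  have refl_eval : ∀ x : ℂ, x ≠ 0 → (refl w q).eval x = x^w * q.eval x⁻¹ := by
    intro x hx
    rw [refl, eval_finset_sum]
    rw [Polynomial.eval_eq_sum_range'
      (lt_of_le_of_lt (hqdeg.trans (Nat.div_le_self w 2)) (Nat.lt_succ_self w)), Finset.mul_sum]
    apply Finset.sum_congr rfl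
    intro j hj
    rw [Finset.mem_range] at hj
    have hjw : j ≤ w := Nat.lt_succ_iff.mp hj
    rw [eval_mul, eval_C, eval_pow, eval_X, inv_pow, pow_sub₀ x hx hjw]
    field_simp
  have refl_coeff : ∀ k : ℕ, k ≤ w → (refl w q).coeff k = q.coeff (w - k) := by
    intro k hk
    rw [refl, finset_sum_coeff, Finset.sum_eq_single (w - k)]
    · rw [coeff_C_mul, coeff_X_pow, if_pos (by omega), mul_one]
    · intro j hj hjne
      rw [Finset.mem_range] at hj
      rw [coeff_C_mul, coeff_X_pow, if_neg (by omega), mul_zero]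
    · intro h
      exact absurd (Finset.mem_range.mpr (by omega)) h
  have refl_coeff_hi : ∀ k : ℕ, w < k → (refl w q).coeff k = 0 := by
    intro k hk
    rw [refl, finset_sum_coeff]
    apply Finset.sum_eq_zero
    intro j hj
    rw [Finset.mem_range] at hj
    rw [coeff_C_mul, coeff_X_pow, if_neg (by omega), mul_zero]
  -- p = q + refl
  have hpqr : p = q + refl w q := by
    apply Polynomial.eq_of_infinite_eval_eq
    apply ((Set.finite_singleton (0:ℂ)).infinite_compl).mono
    intro x hx
    have hx0 : x ≠ 0 := hx
    simp only [Set.mem_setOf_eq, eval_add]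
    rw [hp x hx0, refl_eval x hx0]
  have hcoeff : ∀ k, p.coeff k = q.coeff k + (refl w q).coeff k := by
    intro k; rw [hpqr, coeff_add]
  have hqc : ∀ k, w/2 < k → q.coeff k = 0 := fun k hk =>
    coeff_eq_zero_of_natDegree_lt (lt_of_le_of_lt hqdeg hk)
  -- p(0) = 0, q.coeff 0 = 0
  have hp0 : p.eval 0 = 0 := by
    have h := hodd 0
    rw [neg_zero] at h
    linear_combination h / 2
  have hq0 : q.coeff 0 = 0 := by
    have h0 : p.coeff 0 = 0 := by rw [coeff_zero_eq_eval_zero, hp0]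
    have := hcoeff 0
    rw [h0, refl_coeff 0 (by omega), Nat.sub_zero] at this
    rw [hqc w (by omega), add_zero] at this
    exact this.symm

  -- degree facts
  have hn3 : 3 ≤ w / 2 := by omega
  have hcw1 : p.coeff (w-1) = q.coeff 1 := by
    rw [hcoeff, refl_coeff (w-1) (by omega), hqc (w-1) (by omega), zero_add]
    congr 1
    omega
  have hhigh : ∀ k, w - 1 < k → p.coeff k = 0 := by
    intro k hk
    rcases eq_or_lt_of_le (show w ≤ k by omega) with rfl | hwk
    · rw [hcoeff, refl_coeff w le_rfl, Nat.sub_self, hq0, hqc w (by omega), add_zero]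
    · rw [hcoeff, refl_coeff_hi k hwk, hqc k (by omega), add_zero]
  have hdegle : p.natDegree ≤ w - 1 := natDegree_le_iff_coeff_eq_zero.mpr hhigh
  -- coefficient-1 estimate
  have hsin2pi1 : Complex.sin (2*(π:ℂ)*1) = 0 := by
    rw [mul_one, show (2*(π:ℂ)) = ((2*π : ℝ) : ℂ) by push_cast; ring,
      ← Complex.ofReal_sin, Real.sin_two_pi, Complex.ofReal_zero]
  have hsin2pim1 : Complex.sin (2*(π:ℂ)*(-1)) = 0 := by
    rw [show (2*(π:ℂ)*(-1)) = -((2*π : ℝ) : ℂ) by push_cast; ring, Complex.sin_neg,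
      ← Complex.ofReal_sin, Real.sin_two_pi, Complex.ofReal_zero, neg_zero]
  set f : ℂ → ℂ := fun z => q.eval z - Complex.sin (2*(π:ℂ)*z) with hfdef
  have hfdiff : Differentiable ℂ f := by
    apply Differentiable.sub
    · exact q.differentiable
    · exact Complex.differentiable_sin.comp ((differentiable_id.const_mul _))
  have hf0 : f 0 = 0 := by
    simp only [hfdef, mul_zero, Complex.sin_zero, sub_zero]
    rw [← coeff_zero_eq_eval_zero, hq0]
  have hfb : ∀ z : ℂ, ‖z‖ = 5/4 → ‖f z‖ ≤ 1/100 := by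
    intro z hz; exact hqsin z (le_of_eq hz)
  have hderive := abs_deriv_le f hfdiff hf0 hfb
  have hderiv_val : deriv f 0 = q.coeff 1 - 2*(π:ℂ) := by
    have h1 : HasDerivAt (fun z : ℂ => q.eval z) (q.derivative.eval 0) 0 := q.hasDerivAt 0
    have h2 : HasDerivAt (fun z : ℂ => Complex.sin (2*(π:ℂ)*z))
        (Complex.cos (2*(π:ℂ)*0) * (2*(π:ℂ))) 0 := by
      have hinner : HasDerivAt (fun z : ℂ => 2*(π:ℂ)*z) (2*(π:ℂ)) 0 := by
        simpa using (hasDerivAt_id (0:ℂ)).const_mul (2*(π:ℂ))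
      have h2' := (Complex.hasDerivAt_sin ((2*(π:ℂ))*0)).comp 0 hinner
      simpa [Function.comp_def] using h2'
    have h3 : HasDerivAt f (q.derivative.eval 0 - Complex.cos (2*(π:ℂ)*0) * (2*(π:ℂ))) 0 :=
      h1.sub h2
    rw [h3.deriv]
    rw [mul_zero, Complex.cos_zero, one_mul]
    congr 1
    rw [← coeff_zero_eq_eval_zero, coeff_derivative]
    simp
  rw [hderiv_val] at hderive
  have hpi3 : (3:ℝ) < π := by linarith [Real.pi_gt_three]
  have hq1ne : q.coeff 1 ≠ 0 := by
    intro hzero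
    rw [hzero, zero_sub, norm_neg] at hderive
    have : ‖2*(π:ℂ)‖ = 2*π := by
      rw [show (2*(π:ℂ)) = ((2*π : ℝ) : ℂ) by push_cast; ring, Complex.norm_real, Real.norm_eq_abs,
        abs_of_pos (by linarith)]
    rw [this] at hderive
    linarith
  have hpne : p ≠ 0 := by
    intro h
    apply hq1ne
    rw [← hcw1, h, coeff_zero]
  have hdeg : p.natDegree = w - 1 :=
    le_antisymm hdegle (le_natDegree_of_ne_zero (by rw [hcw1]; exact hq1ne))
  -- values at special points
  have hp1 : p.eval 1 = 0 := by
    rw [hp 1 one_ne_zero, inv_one, one_pow, one_mul, hq1, add_zero]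
  have hpm1 : p.eval (-1) = 0 := by
    have h := hodd 1
    rw [hp1, neg_zero] at h
    exact h
  have hselfinv : ∀ x : ℂ, x ≠ 0 → p.eval x = x^w * p.eval x⁻¹ := by
    intro x hx
    rw [hp x hx, hp x⁻¹ (inv_ne_zero hx), inv_inv]
    rw [mul_add, inv_pow, ← mul_assoc, mul_inv_cancel₀ (pow_ne_zero w hx), one_mul, add_comm]
  have h2w : (2:ℂ)^w ≠ 0 := pow_ne_zero _ two_ne_zero
  have hp2 : p.eval 2 = 0 := by
    have hU1 := hU (-1) (by norm_num) (by norm_num)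
    rw [show (1 : ℂ) - 1 / (-1) = 2 by norm_num, hpm1, zero_add,
      Even.neg_one_pow hweven, one_mul, show ((-1):ℂ) - 1 = -2 by norm_num,
      show (-1 : ℂ) / (-2) = 1/2 by norm_num, Even.neg_pow hweven] at hU1
    have hsi := hselfinv 2 two_ne_zero
    rw [show ((2:ℂ))⁻¹ = 1/2 by norm_num] at hsi
    have h0 : (2:ℂ) * p.eval 2 = 0 := by linear_combination hU1 + hsi
    rcases mul_eq_zero.mp h0 with h | h
    · exact absurd h two_ne_zero
    · exact h
  have hphalf : p.eval (1/2 : ℂ) = 0 := by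
    have hsi := hselfinv 2 two_ne_zero
    rw [show ((2:ℂ))⁻¹ = 1/2 by norm_num, hp2] at hsi
    have := hsi.symm
    rcases mul_eq_zero.mp this with h | h
    · exact absurd h h2w
    · exact h
  have hpm2 : p.eval (-2) = 0 := by
    have h := hodd 2; rw [hp2, neg_zero] at h; exact h
  have hpmhalf : p.eval (-(1/2) : ℂ) = 0 := by
    have h := hodd (1/2); rw [hphalf, neg_zero] at h; exact h
  -- derivative zeros at ±1
  have hdevents : ∀ x₀ : ℂ, x₀ ≠ 0 →
      deriv (fun x : ℂ => p.eval x) x₀ = deriv (fun x : ℂ => x^w * p.eval x⁻¹) x₀ := by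
    intro x₀ hx₀
    apply Filter.EventuallyEq.deriv_eq
    filter_upwards [eventually_ne_nhds hx₀] with x hx
    exact hselfinv x hx
  have hd1 : p.derivative.eval 1 = 0 := by
    have hL : deriv (fun x : ℂ => p.eval x) 1 = p.derivative.eval 1 := p.deriv
    have hR : HasDerivAt (fun x : ℂ => x^w * p.eval x⁻¹)
        ((w:ℂ)*1^(w-1) * p.eval 1⁻¹ + 1^w * (p.derivative.eval 1⁻¹ * (-((1:ℂ)^2)⁻¹))) 1 := by
      exact (hasDerivAt_pow w 1).mul ((p.hasDerivAt (1:ℂ)⁻¹).comp 1 (hasDerivAt_inv one_ne_zero))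
    have := hdevents 1 one_ne_zero
    rw [hL, hR.deriv] at this
    rw [inv_one, hp1, mul_zero, zero_add, one_pow, one_mul, one_pow] at this
    have h2 : (2:ℂ) * p.derivative.eval 1 = 0 := by linear_combination this
    rcases mul_eq_zero.mp h2 with h | h
    · exact absurd h two_ne_zero
    · exact h
  have hdm1 : p.derivative.eval (-1) = 0 := by
    have hL : deriv (fun x : ℂ => p.eval x) (-1) = p.derivative.eval (-1) := p.deriv
    have hR : HasDerivAt (fun x : ℂ => x^w * p.eval x⁻¹)
        ((w:ℂ)*(-1)^(w-1) * p.eval (-1:ℂ)⁻¹ + (-1)^w * (p.derivative.eval (-1:ℂ)⁻¹ * (-(((-1):ℂ)^2)⁻¹))) (-1) := by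
      exact (hasDerivAt_pow w (-1)).mul
        ((p.hasDerivAt ((-1):ℂ)⁻¹).comp (-1) (hasDerivAt_inv (by norm_num)))
    have := hdevents (-1) (by norm_num)
    rw [hL, hR.deriv] at this
    rw [show ((-1):ℂ)⁻¹ = -1 by norm_num, hpm1, mul_zero, zero_add,
      Even.neg_one_pow hweven, one_mul] at this
    have h2 : (2:ℂ) * p.derivative.eval (-1) = 0 := by
      linear_combination this
    rcases mul_eq_zero.mp h2 with h | h
    · exact absurd h two_ne_zero
    · exact h
  -- multiplicity lower bounds
  have hm1ge : 2 ≤ p.rootMultiplicity 1 := by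
    have := Polynomial.lt_rootMultiplicity_of_isRoot_iterate_derivative (t := 1) (n := 1) hpne ?_
    · omega
    · intro m hm
      interval_cases m
      · exact hp1
      · simpa [Polynomial.IsRoot] using hd1
  have hmm1ge : 2 ≤ p.rootMultiplicity (-1) := by
    have := Polynomial.lt_rootMultiplicity_of_isRoot_iterate_derivative (t := -1) (n := 1) hpne ?_
    · omega
    · intro m hm
      interval_cases m
      · exact hpm1
      · simpa [Polynomial.IsRoot] using hdm1
  -- refined bound on q - sin
  have hf1 : f 1 = 0 := by simp only [hfdef]; rw [hq1, hsin2pi1, sub_zero]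
  have hfm1 : f (-1) = 0 := by simp only [hfdef]; rw [hqm1, hsin2pim1, sub_zero]
  have hδ : ∀ z : ℂ, ‖z‖ ≤ 5/4 →
      ‖q.eval z - Complex.sin (2*(π:ℂ)*z)‖ ≤ 16/900 * ‖z^2-1‖ := by
    intro z hz
    exact abs_le_mul_of_two_zeros f hfdiff hf1 hfm1 hfb z hz
  -- setup
  set n := w / 2 with hndef
  obtain ⟨K, hK⟩ := hweven
  have hwn : w = 2*n := by omega
  have hn39 : 39 ≤ n := by omega
  have hwR : (78:ℝ) ≤ (w:ℝ) := by exact_mod_cast hw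
  have hnR : (w:ℝ)/2 = (n:ℝ) := by rw [hwn]; push_cast; ring
  set β : ℝ → ℝ := fun θ => (w:ℝ)/2*θ + 2*π*Real.cos θ with hβdef
  have hβcont : Continuous β := by
    apply Continuous.add
    · exact (continuous_const.mul continuous_id)
    · exact continuous_const.mul Real.continuous_cos
  have hβmono : StrictMono β := by
    apply strictMono_of_deriv_pos
    intro θ
    have hd : HasDerivAt β ((w:ℝ)/2 + 2*π*(-Real.sin θ)) θ := by
      have h1 : HasDerivAt (fun y : ℝ => (w:ℝ)/2*y) ((w:ℝ)/2) θ := by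
        simpa using (hasDerivAt_id θ).const_mul ((w:ℝ)/2)
      exact h1.add ((Real.hasDerivAt_cos θ).const_mul (2*π))
    rw [hd.deriv]
    nlinarith [Real.sin_le_one θ, Real.pi_lt_d2, Real.neg_one_le_sin θ]
  have hβ0 : β 0 = 2*π := by simp [hβdef]
  have hβπ : β π = (w:ℝ)/2*π - 2*π := by
    simp [hβdef, Real.cos_pi]; ring
  -- sample points
  have hsample : ∀ j : ℕ, 2 ≤ j → j ≤ n - 3 →
      ∃ t, t ∈ Set.Ioo (0:ℝ) π ∧ β t = j*π + π/2 := by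
    intro j h2j hjn
    have hjR : (j:ℝ) ≤ (n:ℝ) - 3 := by
      have h' : (j:ℝ) ≤ ((n - 3 : ℕ):ℝ) := by exact_mod_cast hjn
      rw [Nat.cast_sub (by omega)] at h'
      simpa using h'
    have h2jR : (2:ℝ) ≤ (j:ℝ) := by exact_mod_cast h2j
    have hmem : (j:ℝ)*π + π/2 ∈ Set.Ioo (β 0) (β π) := by
      rw [hβ0, hβπ, hnR]
      constructor
      · nlinarith [Real.pi_pos]
      · nlinarith [Real.pi_pos]
    obtain ⟨t, ht, hteq⟩ := intermediate_value_Ioo (le_of_lt Real.pi_pos)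
      hβcont.continuousOn hmem
    exact ⟨t, ht, hteq⟩
  let T : ℕ → ℝ := fun j => if h : 2 ≤ j ∧ j ≤ n - 3 then (hsample j h.1 h.2).choose else 0
  have hT : ∀ j, 2 ≤ j → j ≤ n - 3 → T j ∈ Set.Ioo (0:ℝ) π ∧ β (T j) = j*π + π/2 := by
    intro j h1 h2
    have hh : 2 ≤ j ∧ j ≤ n - 3 := ⟨h1, h2⟩
    simp only [T, dif_pos hh]
    exact (hsample j h1 h2).choose_spec
  -- continuity of F
  have hFcont : Continuous (Ff w q) := by
    unfold Ff
    fun_prop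
  -- sign at the sample points
  have hsign : ∀ j : ℕ, 2 ≤ j → j ≤ n - 3 → 0 < (-1:ℝ)^j * Ff w q (T j) := by
    intro j h1 h2
    obtain ⟨⟨ht0, htπ⟩, hteq⟩ := hT j h1 h2
    have hest := F_est w q hδ (T j) ht0 htπ
    rw [show (w:ℝ)/2*(T j) + 2*π*Real.cos (T j) = β (T j) from rfl, hteq] at hest
    have hsinval : Real.sin ((j:ℝ)*π + π/2) = (-1:ℝ)^j := by
      rw [Real.sin_add_pi_div_two]
      have h := Real.cos_nat_mul_pi_sub 0 j
      rw [sub_zero, Real.cos_zero, mul_one] at h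
      exact h
    rw [hsinval] at hest
    have hspos : 0 < Real.sin (T j) := Real.sin_pos_of_pos_of_lt_pi ht0 htπ
    have hexp1 : 1 + 2*π*Real.sin (T j) ≤ Real.exp (2*π*Real.sin (T j)) := by
      have := Real.add_one_le_exp (2*π*Real.sin (T j)); linarith
    have hexp2 : Real.exp (-(2*π*Real.sin (T j))) ≤ 1 := by
      rw [← Real.exp_zero]
      apply Real.exp_le_exp.mpr
      nlinarith [Real.pi_pos]
    have habs := abs_le.mp hest
    rcases Nat.even_or_odd j with hev | hodd'
    · rw [hev.neg_one_pow] at habs ⊢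
      rw [one_mul]
      nlinarith [habs.1, habs.2, hpi3]
    · rw [hodd'.neg_one_pow] at habs ⊢
      nlinarith [habs.1, habs.2, hpi3]
  -- monotonicity of sample points
  have hTmono : ∀ j k : ℕ, 2 ≤ j → j ≤ n-3 → 2 ≤ k → k ≤ n-3 → j < k → T j < T k := by
    intro j k hj1 hj2 hk1 hk2 hjk
    apply hβmono.lt_iff_lt.mp
    rw [(hT j hj1 hj2).2, (hT k hk1 hk2).2]
    have hjk' : (j:ℝ) < (k:ℝ) := by exact_mod_cast hjk
    nlinarith [Real.pi_pos]
  -- zeros between consecutive sample points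
  have hzero : ∀ j : ℕ, 2 ≤ j → j ≤ n - 4 →
      ∃ u, u ∈ Set.Ioo (T j) (T (j+1)) ∧ Ff w q u = 0 := by
    intro j h1 h2
    have hj3 : j ≤ n - 3 := by omega
    have hj13 : j + 1 ≤ n - 3 := by omega
    have hlt : T j < T (j+1) := hTmono j (j+1) h1 hj3 (by omega) hj13 (by omega)
    have hsj := hsign j h1 hj3
    have hsj1 := hsign (j+1) (by omega) hj13
    rcases Nat.even_or_odd j with hev | hodd'
    · have hpos : 0 < Ff w q (T j) := by rw [hev.neg_one_pow, one_mul] at hsj; exact hsj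
      have hneg : Ff w q (T (j+1)) < 0 := by
        rw [(hev.add_one).neg_one_pow] at hsj1; linarith
      obtain ⟨u, hu, hu0⟩ := intermediate_value_Ioo' (le_of_lt hlt) hFcont.continuousOn
        (show (0:ℝ) ∈ Set.Ioo (Ff w q (T (j+1))) (Ff w q (T j)) from ⟨hneg, hpos⟩)
      exact ⟨u, hu, hu0⟩
    · have hneg : Ff w q (T j) < 0 := by
        rw [hodd'.neg_one_pow] at hsj; linarith
      have hpos : 0 < Ff w q (T (j+1)) := by
        rw [Even.neg_one_pow (by simpa using hodd'.add_one), one_mul] at hsj1; exact hsj1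
      obtain ⟨u, hu, hu0⟩ := intermediate_value_Ioo (le_of_lt hlt) hFcont.continuousOn
        (show (0:ℝ) ∈ Set.Ioo (Ff w q (T j)) (Ff w q (T (j+1))) from ⟨hneg, hpos⟩)
      exact ⟨u, hu, hu0⟩
  let U : ℕ → ℝ := fun j => if h : 2 ≤ j ∧ j ≤ n - 4 then (hzero j h.1 h.2).choose else 0
  have hUspec : ∀ j, 2 ≤ j → j ≤ n-4 →
      U j ∈ Set.Ioo (T j) (T (j+1)) ∧ Ff w q (U j) = 0 := by
    intro j h1 h2
    have hh : 2 ≤ j ∧ j ≤ n - 4 := ⟨h1, h2⟩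
    simp only [U, dif_pos hh]
    exact (hzero j h1 h2).choose_spec
  have hUIoo : ∀ j, 2 ≤ j → j ≤ n-4 → U j ∈ Set.Ioo (0:ℝ) π := by
    intro j h1 h2
    obtain ⟨⟨ha1, ha2⟩, _⟩ := hUspec j h1 h2
    have hTj := (hT j h1 (by omega)).1
    have hTj1 := (hT (j+1) (by omega) (by omega)).1
    exact ⟨lt_trans hTj.1 ha1, lt_trans ha2 hTj1.2⟩
  have hUmono : ∀ j k, 2 ≤ j → j ≤ n-4 → 2 ≤ k → k ≤ n-4 → j < k → U j < U k := by
    intro j k hj1 hj2 hk1 hk2 hjk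
    obtain ⟨⟨_, ha2⟩, _⟩ := hUspec j hj1 hj2
    obtain ⟨⟨hb1, _⟩, _⟩ := hUspec k hk1 hk2
    have hTle : T (j+1) ≤ T k := by
      rcases eq_or_lt_of_le (show j+1 ≤ k by omega) with rfl | hlt
      · exact le_refl _
      · exact le_of_lt (hTmono (j+1) k (by omega) (by omega) hk1 (by omega) hlt)
    calc U j < T (j+1) := ha2
      _ ≤ T k := hTle
      _ < U k := hb1
  -- roots on the circle
  have hproot : ∀ j, 2 ≤ j → j ≤ n-4 → p.eval (Complex.exp (↑(U j) * I)) = 0 := by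
    intro j h1 h2
    rw [p_eval_circle w q p hqreal hp (U j), (hUspec j h1 h2).2]
    simp
  have hpreal : ∀ k, (p.coeff k).im = 0 := by
    intro k
    rw [hcoeff]
    rcases le_or_gt k w with hkw | hkw
    · rw [refl_coeff k hkw]; simp [Complex.add_im, hqreal]
    · rw [refl_coeff_hi k hkw]; simp [hqreal]
  have hexpconj : ∀ u : ℝ, Complex.exp (↑(-u) * I) = (starRingEnd ℂ) (Complex.exp (↑u * I)) := by
    intro u
    rw [← Complex.exp_conj, map_mul, Complex.conj_I, Complex.conj_ofReal]
    congr 1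
    push_cast; ring
  have hprootc : ∀ j, 2 ≤ j → j ≤ n-4 → p.eval (Complex.exp (↑(-(U j)) * I)) = 0 := by
    intro j h1 h2
    rw [hexpconj, eval_conj p hpreal, hproot j h1 h2, map_zero]
  -- assemble the finset of known roots
  set J : Finset ℕ := Finset.Icc 2 (n-4) with hJdef
  have hJcard : J.card = n - 5 := by
    rw [hJdef, Nat.card_Icc]; omega
  set g1 : ℕ → ℂ := fun j => Complex.exp (↑(U j) * I) with hg1def
  set g2 : ℕ → ℂ := fun j => Complex.exp (↑(-(U j)) * I) with hg2def
  have hmemJ : ∀ j ∈ J, 2 ≤ j ∧ j ≤ n-4 := by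
    intro j hj; rw [hJdef, Finset.mem_Icc] at hj; exact hj
  have hg1im : ∀ j ∈ J, 0 < (g1 j).im := by
    intro j hj; obtain ⟨h1, h2⟩ := hmemJ j hj
    have h := hUIoo j h1 h2
    rw [hg1def]
    simp only [Complex.exp_ofReal_mul_I_im]
    exact Real.sin_pos_of_pos_of_lt_pi h.1 h.2
  have hg2im : ∀ j ∈ J, (g2 j).im < 0 := by
    intro j hj; obtain ⟨h1, h2⟩ := hmemJ j hj
    have h := hUIoo j h1 h2
    rw [hg2def]
    simp only [Complex.exp_ofReal_mul_I_im, Real.sin_neg]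
    exact neg_neg_iff_pos.mpr (Real.sin_pos_of_pos_of_lt_pi h.1 h.2)
  have hUeq : ∀ j ∈ J, ∀ k ∈ J, U j = U k → j = k := by
    intro j hj k hk hjk
    obtain ⟨hj1, hj2⟩ := hmemJ j hj; obtain ⟨hk1, hk2⟩ := hmemJ k hk
    rcases lt_trichotomy j k with h | h | h
    · exact absurd hjk (ne_of_lt (hUmono j k hj1 hj2 hk1 hk2 h))
    · exact h
    · exact absurd hjk.symm (ne_of_lt (hUmono k j hk1 hk2 hj1 hj2 h))
  have hg1inj : Set.InjOn g1 J := by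
    intro j hj k hk hjk
    apply hUeq j hj k hk
    have hj' := hUIoo j (hmemJ j hj).1 (hmemJ j hj).2
    have hk' := hUIoo k (hmemJ k hk).1 (hmemJ k hk).2
    apply Real.injOn_cos ⟨le_of_lt hj'.1, le_of_lt hj'.2⟩ ⟨le_of_lt hk'.1, le_of_lt hk'.2⟩
    have := congrArg Complex.re hjk
    rw [hg1def] at this
    simpa only [Complex.exp_ofReal_mul_I_re] using this
  have hg2inj : Set.InjOn g2 J := by
    intro j hj k hk hjk
    apply hUeq j hj k hk
    have hj' := hUIoo j (hmemJ j hj).1 (hmemJ j hj).2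
    have hk' := hUIoo k (hmemJ k hk).1 (hmemJ k hk).2
    apply Real.injOn_cos ⟨le_of_lt hj'.1, le_of_lt hj'.2⟩ ⟨le_of_lt hk'.1, le_of_lt hk'.2⟩
    have := congrArg Complex.re hjk
    rw [hg2def] at this
    simp only [Complex.exp_ofReal_mul_I_re, Real.cos_neg] at this
    exact this
  set Sp : Finset ℂ := {0, 2, -2, 1/2, -(1/2), 1, -1} with hSpdef
  have hdisj2 : Disjoint (J.image g1) (J.image g2) := by
    rw [Finset.disjoint_left]
    intro z hz1 hz2
    obtain ⟨j, hj, rfl⟩ := Finset.mem_image.mp hz1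
    obtain ⟨k, hk, hzk⟩ := Finset.mem_image.mp hz2
    have h1 := hg1im j hj
    have h2 := hg2im k hk
    rw [hzk] at h2
    linarith
  have hdisj1 : Disjoint Sp (J.image g1 ∪ J.image g2) := by
    rw [Finset.disjoint_left]
    intro z hz hz2
    have him : z.im = 0 := by
      rw [hSpdef] at hz
      simp only [Finset.mem_insert, Finset.mem_singleton] at hz
      rcases hz with rfl|rfl|rfl|rfl|rfl|rfl|rfl <;> norm_num
    rw [Finset.mem_union] at hz2
    rcases hz2 with h | h
    · obtain ⟨j, hj, rfl⟩ := Finset.mem_image.mp h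
      exact absurd him (ne_of_gt (hg1im j hj))
    · obtain ⟨j, hj, rfl⟩ := Finset.mem_image.mp h
      exact absurd him (ne_of_lt (hg2im j hj))
  set S : Finset ℂ := Sp ∪ (J.image g1 ∪ J.image g2) with hSdef
  have hSpsum : ∑ z ∈ Sp, p.rootMultiplicity z
      = p.rootMultiplicity 0 + p.rootMultiplicity 2 + p.rootMultiplicity (-2)
        + p.rootMultiplicity (1/2) + p.rootMultiplicity (-(1/2))
        + p.rootMultiplicity 1 + p.rootMultiplicity (-1) := by
    rw [hSpdef]
    rw [Finset.sum_insert (by norm_num), Finset.sum_insert (by norm_num),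
      Finset.sum_insert (by norm_num), Finset.sum_insert (by norm_num),
      Finset.sum_insert (by norm_num), Finset.sum_insert (by norm_num),
      Finset.sum_singleton]
    ring
  have hC1sum : (n - 5) ≤ ∑ z ∈ J.image g1, p.rootMultiplicity z := by
    have h1 : ∑ _z ∈ J.image g1, 1 ≤ ∑ z ∈ J.image g1, p.rootMultiplicity z := by
      apply Finset.sum_le_sum
      intro z hz
      obtain ⟨j, hj, rfl⟩ := Finset.mem_image.mp hz
      obtain ⟨ha, hb⟩ := hmemJ j hj
      exact (rootMultiplicity_pos hpne).mpr (hproot j ha hb)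
    calc (n-5) = ∑ _z ∈ J.image g1, 1 := by
          rw [Finset.sum_const, smul_eq_mul, mul_one, Finset.card_image_of_injOn hg1inj, hJcard]
      _ ≤ _ := h1
  have hC2sum : (n - 5) ≤ ∑ z ∈ J.image g2, p.rootMultiplicity z := by
    have h1 : ∑ _z ∈ J.image g2, 1 ≤ ∑ z ∈ J.image g2, p.rootMultiplicity z := by
      apply Finset.sum_le_sum
      intro z hz
      obtain ⟨j, hj, rfl⟩ := Finset.mem_image.mp hz
      obtain ⟨ha, hb⟩ := hmemJ j hj
      exact (rootMultiplicity_pos hpne).mpr (hprootc j ha hb)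
    calc (n-5) = ∑ _z ∈ J.image g2, 1 := by
          rw [Finset.sum_const, smul_eq_mul, mul_one, Finset.card_image_of_injOn hg2inj, hJcard]
      _ ≤ _ := h1
  have htot := sum_rootMultiplicity_le p hpne S
  rw [hdeg, hSdef, Finset.sum_union hdisj1, Finset.sum_union hdisj2, hSpsum] at htot
  have hm0 : 1 ≤ p.rootMultiplicity 0 := (rootMultiplicity_pos hpne).mpr hp0
  have hm2 : 1 ≤ p.rootMultiplicity 2 := (rootMultiplicity_pos hpne).mpr hp2
  have hmm2 : 1 ≤ p.rootMultiplicity (-2) := (rootMultiplicity_pos hpne).mpr hpm2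
  have hmh : 1 ≤ p.rootMultiplicity (1/2) := (rootMultiplicity_pos hpne).mpr hphalf
  have hmmh : 1 ≤ p.rootMultiplicity (-(1/2)) := (rootMultiplicity_pos hpne).mpr hpmhalf
  refine ⟨hpne, hdeg, by omega, by omega, by omega, by omega, by omega, by omega, by omega, ?_⟩
  intro z hz hzset
  by_cases hzC : z ∈ J.image g1 ∪ J.image g2
  · rw [Finset.mem_union] at hzC
    rcases hzC with h | h <;> obtain ⟨j, hj, rfl⟩ := Finset.mem_image.mp h
    · exact Complex.norm_exp_ofReal_mul_I _
    · exact Complex.norm_exp_ofReal_mul_I _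
  · exfalso
    have hzSp : z ∉ Sp := by
      intro hmem
      apply hzset
      rw [hSpdef] at hmem
      simp only [Finset.mem_insert, Finset.mem_singleton] at hmem
      simpa [Set.mem_insert_iff, Set.mem_singleton_iff] using hmem
    have hzS : z ∉ S := by
      rw [hSdef, Finset.mem_union]
      push_neg
      exact ⟨hzSp, hzC⟩
    have htot2 := sum_rootMultiplicity_le p hpne (insert z S)
    rw [Finset.sum_insert hzS, hdeg, hSdef, Finset.sum_union hdisj1,
      Finset.sum_union hdisj2, hSpsum] at htot2
    have hz1 : 1 ≤ p.rootMultiplicity z := (rootMultiplicity_pos hpne).mpr hz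
    omega


end ZPPAux

/-- Let `w ≥ 78` be even and `q` a real-coefficient polynomial of degree
at most `w/2` with `q(1) = q(-1) = 0` which is within `1/100` of `sin(2πz)` on `|z| ≤ 5/4`.
If `p` is the polynomial with `p(x) = q(x) + x^w q(1/x)` for `x ≠ 0`, `p` is odd, and `p`
satisfies the three-term period relation, then `p` has degree `w - 1`, simple zeros at
`0, ±2, ±1/2`, double zeros at `±1`, and all its remaining zeros lie on `|z| = 1`. -/
theorem zeros_of_period_polynomial_abstract
    (w : ℕ) (hw : 78 ≤ w) (hweven : Even w)
    (q : Polynomial ℂ) (hqreal : ∀ n, (q.coeff n).im = 0)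
    (hqdeg : q.natDegree ≤ w / 2)
    (hq1 : q.eval 1 = 0) (hqm1 : q.eval (-1) = 0)
    (hqsin : ∀ z : ℂ, ‖z‖ ≤ 5 / 4 →
      ‖q.eval z - Complex.sin (2 * (π : ℂ) * z)‖ ≤ 1 / 100)
    (p : Polynomial ℂ)
    (hp : ∀ x : ℂ, x ≠ 0 → p.eval x = q.eval x + x ^ w * q.eval x⁻¹)
    (hodd : ∀ x : ℂ, p.eval (-x) = -p.eval x)
    (hU : ∀ x : ℂ, x ≠ 0 → x ≠ 1 →
      p.eval x + x ^ w * p.eval (1 - 1 / x)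
        + (x - 1) ^ w * p.eval (-1 / (x - 1)) = 0) :
    p ≠ 0 ∧ p.natDegree = w - 1 ∧
    p.rootMultiplicity 0 = 1 ∧ p.rootMultiplicity 2 = 1 ∧ p.rootMultiplicity (-2) = 1 ∧
    p.rootMultiplicity (1 / 2) = 1 ∧ p.rootMultiplicity (-(1 / 2)) = 1 ∧
    p.rootMultiplicity 1 = 2 ∧ p.rootMultiplicity (-1) = 2 ∧
    (∀ z : ℂ, p.eval z = 0 →
      z ∉ ({0, 2, -2, 1 / 2, -(1 / 2), 1, -1} : Set ℂ) → ‖z‖ = 1) := by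
  exact ZPP.main_aux w hw hweven q hqreal hqdeg hq1 hqm1 hqsin p hp hodd hU
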